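/- Let S be a bicancellative semigroup admitting a left Følner sequence, embedded via η into a group G with ⟨η(S)⟩ = G. Then G is amenable; concretely, if (F_n) is a left Følner sequence in S, then (η(F_n)) satisfies |g·η(F_n) △ η(F_n)| / |η(F_n)| → 0 for every g ∈ G. -/

import Mathlib

open Filter

section Aux

variable {G : Type*} [Group G] [DecidableEq G]

lemma aux_translate_card (g : G) (A B : Finset G) :
    (symmDiff (A.image (fun x => g * x)) (B.image (fun x => g * x))).card
      = (symmDiff A B).card := by
  rw [← Finset.image_symmDiff _ _ (mul_right_injective g),
    Finset.card_image_of_injective _ (mul_right_injective g)]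

lemma aux_triangle (A B C : Finset G) :
    (symmDiff A C).card ≤ (symmDiff A B).card + (symmDiff B C).card := by
  calc (symmDiff A C).card ≤ (symmDiff A B ∪ symmDiff B C).card :=
        Finset.card_le_card (by simpa using symmDiff_triangle A B C)
    _ ≤ _ := Finset.card_union_le _ _

end Aux

/-- If a bicancellative semigroup `S` with a left Følner sequence embeds via `η` into
a group `G` generated by `η(S)`, then `G` is amenable: the sets `η(F_n)` form a left
Følner sequence for `G`. -/
theorem stmt_17 (S : Type*) [Semigroup S] [DecidableEq S]
    (G : Type*) [Group G] [DecidableEq G] (η : S → G)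
    (hhom : ∀ a b : S, η (a * b) = η a * η b)
    (hinj : Function.Injective η)
    (hgen : Subgroup.closure (Set.range η) = ⊤)
    (hlc : ∀ a b c : S, a * b = a * c → b = c)
    (hrc : ∀ a b c : S, b * a = c * a → b = c)
    (F : ℕ → Finset S) (hne : ∀ n, (F n).Nonempty)
    (hfol : ∀ s : S, Tendsto
      (fun n => ((symmDiff ((F n).image (fun x => s * x)) (F n)).card : ℝ) / (F n).card)
      atTop (nhds 0)) :
    ∀ g : G, Tendsto
      (fun n => ((symmDiff (((F n).image η).image (fun x => g * x)) ((F n).image η)).card : ℝ) /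
        ((F n).image η).card)
      atTop (nhds 0) := by
  set A : ℕ → Finset G := fun n => (F n).image η with hA
  have hcard : ∀ n, (A n).card = (F n).card := fun n =>
    Finset.card_image_of_injective _ hinj
  have hpos : ∀ n, (0 : ℝ) < (A n).card := fun n => by
    rw [hcard n]
    exact_mod_cast Finset.card_pos.mpr (hne n)
  set P : G → Prop := fun g => Tendsto
      (fun n => ((symmDiff ((A n).image (fun x => g * x)) (A n)).card : ℝ) / (A n).card)
      atTop (nhds 0) with hP
  suffices h : ∀ g : G, P g by exact h
  have hmem : ∀ g ∈ Set.range η, P g := by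
    rintro _ ⟨s, rfl⟩
    have key : ∀ n, ((symmDiff ((A n).image (fun x => η s * x)) (A n)).card : ℝ) / (A n).card
        = ((symmDiff ((F n).image (fun x => s * x)) (F n)).card : ℝ) / (F n).card := by
      intro n
      have h1 : (A n).image (fun x => η s * x) = ((F n).image (fun x => s * x)).image η := by
        simp only [hA, Finset.image_image]
        congr 1
        ext x
        simp [Function.comp, hhom]
      rw [h1, hA, ← Finset.image_symmDiff _ _ hinj,
        Finset.card_image_of_injective _ hinj, hcard n]
    simpa only [hP, key] using hfol s
  have hone : P 1 := by
    have : ∀ n, ((symmDiff ((A n).image (fun x => (1:G) * x)) (A n)).card : ℝ) / (A n).card = 0 := by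
      intro n
      simp [symmDiff_self]
    simpa only [hP, this] using tendsto_const_nhds
  have hinv : ∀ g : G, P g → P g⁻¹ := by
    intro g hg
    have key : ∀ n, (symmDiff ((A n).image (fun x => g⁻¹ * x)) (A n)).card
        = (symmDiff ((A n).image (fun x => g * x)) (A n)).card := by
      intro n
      have := aux_translate_card g ((A n).image (fun x => g⁻¹ * x)) (A n)
      rw [← this, Finset.image_image]
      have h2 : ((fun x => g * x) ∘ fun x => g⁻¹ * x) = id := by
        funext x; simp
      rw [h2, Finset.image_id, symmDiff_comm]
    simp only [hP] at hg ⊢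
    convert hg using 2 with n
    rw [key n]
  have hmul : ∀ g h : G, P g → P h → P (g * h) := by
    intro g h hg hh
    simp only [hP] at hg hh ⊢
    have hbound : ∀ n, ((symmDiff ((A n).image (fun x => (g*h) * x)) (A n)).card : ℝ) / (A n).card
        ≤ ((symmDiff ((A n).image (fun x => h * x)) (A n)).card : ℝ) / (A n).card
          + ((symmDiff ((A n).image (fun x => g * x)) (A n)).card : ℝ) / (A n).card := by
      intro n
      rw [← add_div]
      have hcomp : (A n).image (fun x => (g*h) * x)
          = ((A n).image (fun x => h * x)).image (fun x => g * x) := by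
        conv_rhs => rw [Finset.image_image]
        congr 1
        funext x
        simp [Function.comp, mul_assoc]
      have htri : (symmDiff ((A n).image (fun x => (g*h) * x)) (A n)).card
          ≤ (symmDiff ((A n).image (fun x => h * x)) (A n)).card
            + (symmDiff ((A n).image (fun x => g * x)) (A n)).card := by
        calc (symmDiff ((A n).image (fun x => (g*h) * x)) (A n)).card
            ≤ (symmDiff ((A n).image (fun x => (g*h) * x)) ((A n).image (fun x => g * x))).card
              + (symmDiff ((A n).image (fun x => g * x)) (A n)).card := aux_triangle _ _ _
          _ = _ := by rw [hcomp, aux_translate_card g]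
      gcongr
      exact_mod_cast htri
    have hnn : ∀ n, (0:ℝ) ≤ ((symmDiff ((A n).image (fun x => (g*h) * x)) (A n)).card : ℝ) / (A n).card :=
      fun n => div_nonneg (Nat.cast_nonneg _) (le_of_lt (hpos n))
    have := squeeze_zero hnn hbound (by simpa using hh.add hg)
    exact this
  intro g
  have : g ∈ Subgroup.closure (Set.range η) := hgen ▸ Subgroup.mem_top g
  exact Subgroup.closure_induction hmem hone (fun x y _ _ => hmul x y) (fun x _ => hinv x) this
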